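/- Let r ≥ 1 and a be integers and let τ be in the upper half plane ℍ. Then both of the following series converge absolutely and are equal: Σ over (k₁,…,k_r) ∈ ℤ^r with k₁ + ⋯ + k_r = −a of e^{2πiτ( (k₁² + ⋯ + k_r²)/2 − a²/(2r) )}, and Σ over (k₁,…,k_{r−1}) ∈ (a/r, …, a/r) + ℤ^{r−1} of e^{2πiτ Σ_{1 ≤ i ≤ j ≤ r−1} k_i k_j} (for r = 1 the second sum is the single term 1). -/

import Mathlib

open scoped BigOperators
open Finset

private lemma sum_swap_Iio {M : Type*} [AddCommMonoid M] {n : ℕ} (f : Fin n → Fin n → M) :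
    ∑ i, ∑ j ∈ Finset.Iio i, f i j = ∑ i, ∑ j ∈ Finset.Ioi i, f j i := by
  rw [Finset.sum_sigma', Finset.sum_sigma']
  refine Finset.sum_nbij' (fun p => ⟨p.2, p.1⟩) (fun p => ⟨p.2, p.1⟩) ?_ ?_ ?_ ?_ ?_ <;> simp

private lemma sum_Ici_mul {K : Type*} [Field K] [LinearOrder K] [IsStrictOrderedRing K] {n : ℕ} (x : Fin n → K) :
    ∑ i, ∑ j ∈ Finset.Ici i, x i * x j = ((∑ i, x i) ^ 2 + ∑ i, x i ^ 2) / 2 := by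
  have hA : ∑ i, ∑ j ∈ Finset.Ici i, x i * x j
      = (∑ i, x i ^ 2) + ∑ i, ∑ j ∈ Finset.Ioi i, x i * x j := by
    rw [← Finset.sum_add_distrib]
    refine Finset.sum_congr rfl fun i _ => ?_
    rw [sq]
    exact (Finset.add_sum_Ioi_eq_sum_Ici (f := fun j => x i * x j) i).symm
  have hB : ∑ i, ∑ j ∈ Finset.Iio i, x i * x j = ∑ i, ∑ j ∈ Finset.Ioi i, x i * x j := by
    rw [sum_swap_Iio]
    exact Finset.sum_congr rfl fun i _ => Finset.sum_congr rfl fun j _ => mul_comm _ _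
  have key : ∀ i : Fin n, (∑ j ∈ Finset.Ici i, x i * x j) + ∑ j ∈ Finset.Iio i, x i * x j
      = ∑ j, x i * x j := by
    intro i
    have h : Finset.Ici i = (Finset.Iio i)ᶜ := by ext j; simp
    rw [h, Finset.sum_compl_add_sum]
  have hsq : (∑ i, x i) ^ 2 = (∑ i, ∑ j ∈ Finset.Ici i, x i * x j)
      + ∑ i, ∑ j ∈ Finset.Iio i, x i * x j := by
    rw [sq, Finset.sum_mul_sum, ← Finset.sum_add_distrib]
    exact Finset.sum_congr rfl fun i _ => (key i).symm
  rw [hB] at hsq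
  rw [hA] at hsq ⊢
  rw [eq_div_iff (two_ne_zero (α := K))]
  linear_combination -hsq

private lemma exponent_eq (n : ℕ) (a : ℤ) (w : Fin n → ℤ) :
    ((∑ i : Fin (n + 1), ((Fin.snoc w (-a - ∑ i, w i) : Fin (n + 1) → ℤ) i) ^ 2 : ℤ) : ℚ) / 2
      - (a : ℚ) ^ 2 / (2 * ((n : ℚ) + 1))
    = ∑ i : Fin n, ∑ j ∈ Finset.Ici i,
        ((a : ℚ) / ((n : ℚ) + 1) + (w i : ℚ)) * ((a : ℚ) / ((n : ℚ) + 1) + (w j : ℚ)) := by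
  have hn : ((n : ℚ) + 1) ≠ 0 := by positivity
  rw [sum_Ici_mul]
  push_cast
  rw [Fin.sum_univ_castSucc]
  simp only [Fin.snoc_castSucc, Fin.snoc_last]
  have h1 : ∑ i : Fin n, ((a : ℚ) / ((n : ℚ) + 1) + (w i : ℚ))
      = n * ((a : ℚ) / ((n : ℚ) + 1)) + ∑ i, (w i : ℚ) := by
    rw [Finset.sum_add_distrib, Finset.sum_const]
    simp [nsmul_eq_mul]
  have h2 : ∑ i : Fin n, ((a : ℚ) / ((n : ℚ) + 1) + (w i : ℚ)) ^ 2
      = n * ((a : ℚ) / ((n : ℚ) + 1)) ^ 2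
        + 2 * ((a : ℚ) / ((n : ℚ) + 1)) * ∑ i, (w i : ℚ) + ∑ i, (w i : ℚ) ^ 2 := by
    simp_rw [add_sq]
    rw [Finset.sum_add_distrib, Finset.sum_add_distrib, Finset.sum_const, ← Finset.mul_sum]
    simp [nsmul_eq_mul]
  rw [h1, h2]
  field_simp
  push_cast
  ring

private def blowEquiv (n : ℕ) (a : ℤ) :
    (Fin n → ℤ) ≃ {v : Fin (n + 1) → ℤ // ∑ i, v i = -a} where
  toFun w := ⟨Fin.snoc w (-a - ∑ i, w i), by
    rw [Fin.sum_univ_castSucc]; simp⟩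
  invFun v i := v.1 i.castSucc
  left_inv w := by funext i; simp
  right_inv v := by
    apply Subtype.ext
    funext i
    refine Fin.lastCases ?_ (fun j => ?_) i
    · have h := v.2
      rw [Fin.sum_univ_castSucc] at h
      simp only [Fin.snoc_last]
      omega
    · simp

private lemma summable_pi_prod {g : ℤ → ℝ} (hg : Summable g) (h0 : ∀ t, 0 ≤ g t) :
    ∀ n : ℕ, Summable fun w : Fin n → ℤ => ∏ i, g (w i)
  | 0 => by
      simp only [Finset.univ_eq_empty, Finset.prod_empty]
      exact Summable.of_finite
  | (n + 1) => by
      have ih := summable_pi_prod hg h0 n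
      have h := hg.mul_of_nonneg ih h0 fun w => Finset.prod_nonneg fun i _ => h0 _
      apply (Equiv.summable_iff (Fin.consEquiv (fun _ : Fin (n + 1) => ℤ))).mp
      refine h.congr fun p => ?_
      simp [Function.comp, Fin.prod_univ_succ]

private lemma summable_gauss {c : ℝ} (hc : 0 < c) :
    Summable fun t : ℤ => Real.exp (-c * (t : ℝ) ^ 2) := by
  have h := summable_pow_mul_jacobiTheta₂_term_bound 0 (T := c / Real.pi)
    (div_pos hc Real.pi_pos) 0
  refine h.congr fun t => ?_
  rw [pow_zero, one_mul]
  congr 1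
  field_simp
  ring

private lemma norm_cexp_rat (τ : ℂ) (q : ℚ) :
    ‖Complex.exp (2 * (Real.pi : ℂ) * Complex.I * τ * (q : ℂ))‖
      = Real.exp (-(2 * (Real.pi * τ.im)) * (q : ℝ)) := by
  rw [Complex.norm_exp]
  congr 1
  have h : 2 * (Real.pi : ℂ) * Complex.I * τ * (q : ℂ)
      = ((2 * Real.pi * (q : ℝ) : ℝ) : ℂ) * (τ * Complex.I) := by push_cast; ring
  rw [h, Complex.re_ofReal_mul, Complex.mul_I_re]
  ring

theorem theta_blowup_identity (r : ℕ) (hr : 1 ≤ r) (a : ℤ) (τ : ℂ) (hτ : 0 < τ.im) :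
    Summable (fun v : {v : Fin r → ℤ // ∑ i, v i = -a} =>
      ‖Complex.exp (2 * (Real.pi : ℂ) * Complex.I * τ *
        (((∑ i, (v.1 i) ^ 2 : ℤ) : ℂ) / 2 - (a : ℂ) ^ 2 / (2 * (r : ℂ))))‖) ∧
    Summable (fun w : Fin (r - 1) → ℤ =>
      ‖Complex.exp (2 * (Real.pi : ℂ) * Complex.I * τ *
        (((∑ i : Fin (r - 1), ∑ j ∈ Finset.Ici i,
          ((a : ℚ) / (r : ℚ) + (w i : ℚ)) * ((a : ℚ) / (r : ℚ) + (w j : ℚ))) : ℚ) : ℂ))‖) ∧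
    (∑' v : {v : Fin r → ℤ // ∑ i, v i = -a},
      Complex.exp (2 * (Real.pi : ℂ) * Complex.I * τ *
        (((∑ i, (v.1 i) ^ 2 : ℤ) : ℂ) / 2 - (a : ℂ) ^ 2 / (2 * (r : ℂ)))))
      = ∑' w : Fin (r - 1) → ℤ,
        Complex.exp (2 * (Real.pi : ℂ) * Complex.I * τ *
          (((∑ i : Fin (r - 1), ∑ j ∈ Finset.Ici i,
            ((a : ℚ) / (r : ℚ) + (w i : ℚ)) * ((a : ℚ) / (r : ℚ) + (w j : ℚ))) : ℚ) : ℂ)) := by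
  obtain ⟨n, rfl⟩ : ∃ n, r = n + 1 := ⟨r - 1, (Nat.succ_pred_eq_of_pos hr).symm⟩
  clear hr
  -- defeq: n + 1 - 1 = n
  set F : ({v : Fin (n + 1) → ℤ // ∑ i, v i = -a}) → ℂ := fun v =>
    Complex.exp (2 * (Real.pi : ℂ) * Complex.I * τ *
      (((∑ i, (v.1 i) ^ 2 : ℤ) : ℂ) / 2 - (a : ℂ) ^ 2 / (2 * ((n + 1 : ℕ) : ℂ)))) with hF
  set Qf : (Fin n → ℤ) → ℚ := fun w => ∑ i : Fin n, ∑ j ∈ Finset.Ici i,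
      ((a : ℚ) / ((n + 1 : ℕ) : ℚ) + (w i : ℚ)) * ((a : ℚ) / ((n + 1 : ℕ) : ℚ) + (w j : ℚ))
    with hQf
  set G : (Fin n → ℤ) → ℂ := fun w =>
    Complex.exp (2 * (Real.pi : ℂ) * Complex.I * τ * ((Qf w : ℚ) : ℂ)) with hG
  set c : ℝ := Real.pi * τ.im with hcdef
  have hc0 : (0 : ℝ) < c := mul_pos Real.pi_pos hτ
  set α' : ℝ := (a : ℝ) / ((n + 1 : ℕ) : ℝ) with hα'
  -- norm of G terms
  have hGnorm : ∀ w, ‖G w‖ = Real.exp (-(2 * c) * ((Qf w : ℚ) : ℝ)) := fun w =>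
    norm_cexp_rat τ (Qf w)
  -- real form of Qf
  have hQr : ∀ w : Fin n → ℤ, ((Qf w : ℚ) : ℝ)
      = ((∑ i, (α' + ((w i : ℤ) : ℝ))) ^ 2 + ∑ i, (α' + ((w i : ℤ) : ℝ)) ^ 2) / 2 := by
    intro w
    rw [← sum_Ici_mul (K := ℝ) (fun i => α' + ((w i : ℤ) : ℝ))]
    rw [hQf, hα']
    push_cast
    norm_num
  -- comparison function
  set g : ℤ → ℝ := fun t => Real.exp (c * α' ^ 2 - c / 2 * (t : ℝ) ^ 2) with hgdef
  have hgsum : Summable g := by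
    have h := (summable_gauss (c := c / 2) (by positivity)).mul_left (Real.exp (c * α' ^ 2))
    refine h.congr fun t => ?_
    rw [hgdef, ← Real.exp_add]
    ring_nf
  have hg0 : ∀ t, 0 ≤ g t := fun t => (Real.exp_pos _).le
  have hGsummable : Summable fun w : Fin n → ℤ => ‖G w‖ := by
    refine Summable.of_nonneg_of_le (fun w => norm_nonneg _) (fun w => ?_)
      (summable_pi_prod hgsum hg0 n)
    rw [hGnorm w, hQr w]
    have hprod : (∏ i, g (w i)) = Real.exp (∑ i : Fin n,
        (c * α' ^ 2 - c / 2 * ((w i : ℤ) : ℝ) ^ 2)) := (Real.exp_sum _ _).symm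
    rw [hprod]
    apply Real.exp_le_exp.mpr
    have h1 : ∀ i ∈ Finset.univ, ((w i : ℤ) : ℝ) ^ 2 / 2 - α' ^ 2 ≤ (α' + ((w i : ℤ) : ℝ)) ^ 2 :=
      fun i _ => by nlinarith [sq_nonneg (2 * α' + ((w i : ℤ) : ℝ))]
    have h2 : ∑ i, (((w i : ℤ) : ℝ) ^ 2 / 2 - α' ^ 2) ≤ ∑ i, (α' + ((w i : ℤ) : ℝ)) ^ 2 :=
      Finset.sum_le_sum h1
    have h3 : (0 : ℝ) ≤ (∑ i, (α' + ((w i : ℤ) : ℝ))) ^ 2 := sq_nonneg _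
    have h4 : ∑ i : Fin n, (c * α' ^ 2 - c / 2 * ((w i : ℤ) : ℝ) ^ 2)
        = -c * ∑ i, (((w i : ℤ) : ℝ) ^ 2 / 2 - α' ^ 2) := by
      rw [Finset.mul_sum]
      exact Finset.sum_congr rfl fun i _ => by ring
    rw [h4]
    have h5 : c * ∑ i, (((w i : ℤ) : ℝ) ^ 2 / 2 - α' ^ 2)
        ≤ c * ∑ i, (α' + ((w i : ℤ) : ℝ)) ^ 2 := mul_le_mul_of_nonneg_left h2 hc0.le
    nlinarith [mul_nonneg hc0.le h3]
  -- termwise equality along the equivalence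
  have keyterm : ∀ w : Fin n → ℤ, F (blowEquiv n a w) = G w := by
    intro w
    rw [hF, hG]
    have hx : (((∑ i : Fin (n + 1),
          ((Fin.snoc w (-a - ∑ i, w i) : Fin (n + 1) → ℤ) i) ^ 2 : ℤ)) : ℂ) / 2
        - (a : ℂ) ^ 2 / (2 * ((n + 1 : ℕ) : ℂ)) = ((Qf w : ℚ) : ℂ) := by
      have hcast := congrArg (fun q : ℚ => (q : ℂ)) (exponent_eq n a w)
      rw [hQf]
      push_cast at hcast ⊢
      linear_combination hcast
    show Complex.exp _ = Complex.exp _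
    rw [← hx]
    rfl
  refine ⟨?_, hGsummable, ?_⟩
  · have h := hGsummable.congr fun w => (congrArg norm (keyterm w)).symm
    exact ((blowEquiv n a).summable_iff).mp h
  · calc ∑' v, F v = ∑' w, F (blowEquiv n a w) := ((blowEquiv n a).tsum_eq F).symm
      _ = ∑' w, G w := tsum_congr keyterm
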